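/- The angle function θ is strictly increasing on [0,∞): for all 0 ≤ z₁ < z₂ one has θ(z₁) < θ(z₂). -/

import Mathlib

open Real Set

/-- reciprocal Gamma -/
noncomputable def rg : ℝ → ℝ := fun x => (Real.Gamma x)⁻¹

/-- derivative of reciprocal Gamma -/
noncomputable def rg' : ℝ → ℝ := fun x => (deriv (fun s : ℂ => (Complex.Gamma s)⁻¹) x).re

lemma hasDerivAt_rg (x : ℝ) : HasDerivAt rg (rg' x) x := by
  have h : HasDerivAt (fun s : ℂ => (Complex.Gamma s)⁻¹)
      (deriv (fun s : ℂ => (Complex.Gamma s)⁻¹) x) x :=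
    (Complex.differentiable_one_div_Gamma (x : ℂ)).hasDerivAt
  have h2 := h.real_of_complex
  have : (fun y : ℝ => ((Complex.Gamma (y : ℂ))⁻¹).re) = rg := by
    funext y
    rw [rg, Complex.Gamma_ofReal, ← Complex.ofReal_inv, Complex.ofReal_re]
  rwa [this] at h2

lemma continuous_rg' : Continuous rg' := by
  have h : AnalyticOnNhd ℂ (deriv (fun s : ℂ => (Complex.Gamma s)⁻¹)) univ :=
    (Complex.differentiable_one_div_Gamma.differentiableOn.analyticOnNhd isOpen_univ).deriv
  have hc : Continuous (deriv (fun s : ℂ => (Complex.Gamma s)⁻¹)) := by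
    rw [continuous_iff_continuousAt]
    intro z
    exact (h z (mem_univ z)).continuousAt
  exact (Complex.continuous_re.comp (hc.comp Complex.continuous_ofReal))

lemma continuous_rg : Continuous rg := by
  rw [continuous_iff_continuousAt]
  exact fun x => (hasDerivAt_rg x).continuousAt

/-- derivative of Gamma -/
noncomputable def dG : ℝ → ℝ := fun x => -rg' x / (rg x) ^ 2

lemma rg_pos {x : ℝ} (hx : 0 < x) : 0 < rg x := inv_pos.mpr (Real.Gamma_pos_of_pos hx)

lemma hasDerivAt_Gamma {x : ℝ} (hx : 0 < x) : HasDerivAt Real.Gamma (dG x) x := by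
  have h := (hasDerivAt_rg x).inv (rg_pos hx).ne'
  have : rg⁻¹ = Real.Gamma := by funext y; simp [rg]
  rw [this] at h
  exact h

/-- digamma -/
noncomputable def psi : ℝ → ℝ := fun x => dG x / Real.Gamma x

lemma hasDerivAt_logGamma {v : ℝ} (hv : 0 < v) :
    HasDerivAt (Real.log ∘ Real.Gamma) (psi v) v :=
  (hasDerivAt_Gamma hv).log (Real.Gamma_pos_of_pos hv).ne'

lemma psi_monotoneOn : MonotoneOn psi (Ioi 0) := by
  have h := Real.convexOn_log_Gamma.monotoneOn_deriv
    (fun x hx => (hasDerivAt_logGamma hx).differentiableAt)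
  intro a ha b hb hab
  have ha' : deriv (Real.log ∘ Real.Gamma) a = psi a := (hasDerivAt_logGamma ha).deriv
  have hb' : deriv (Real.log ∘ Real.Gamma) b = psi b := (hasDerivAt_logGamma hb).deriv
  rw [← ha', ← hb']
  exact h ha hb hab

lemma psi_add_one {v : ℝ} (hv : 0 < v) : psi (v + 1) = psi v + 1 / v := by
  have h1 : HasDerivAt (fun x => Real.log (Real.Gamma (x + 1))) (psi (v + 1)) v := by
    have := (hasDerivAt_logGamma (by linarith : (0:ℝ) < v + 1)).comp v
      ((hasDerivAt_id v).add_const 1)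
    simpa [Function.comp_def] using this
  have h2 : HasDerivAt (fun x => Real.log x + Real.log (Real.Gamma x)) (1 / v + psi v) v := by
    have := (Real.hasDerivAt_log hv.ne').add (hasDerivAt_logGamma hv)
    simpa [one_div, Function.comp_def, Pi.add_def] using this
  have heq : (fun x => Real.log (Real.Gamma (x + 1)))
      =ᶠ[nhds v] (fun x => Real.log x + Real.log (Real.Gamma x)) := by
    filter_upwards [Ioi_mem_nhds hv] with x hx
    rw [Real.Gamma_add_one (ne_of_gt hx),
      Real.log_mul (ne_of_gt hx) (Real.Gamma_pos_of_pos hx).ne']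
  have := h1.congr_of_eventuallyEq heq.symm
  have := this.unique h2
  linarith

lemma psi_half_bounds {v : ℝ} (hv : 0 < v) :
    0 ≤ psi (v + 1/2) - psi v ∧ psi (v + 1/2) - psi v ≤ 1 / v := by
  constructor
  · have := psi_monotoneOn (mem_Ioi.mpr hv) (mem_Ioi.mpr (by linarith : (0:ℝ) < v + 1/2))
      (by linarith)
    linarith
  · have h1 := psi_monotoneOn (mem_Ioi.mpr (by linarith : (0:ℝ) < v + 1/2))
      (mem_Ioi.mpr (by linarith : (0:ℝ) < v + 1)) (by linarith)
    have h2 := psi_add_one hv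
    linarith

lemma rg_reflect {s : ℝ} (hs : s < 1) :
    (Real.Gamma s)⁻¹ = Real.Gamma (1 - s) * Real.sin (π * s) / π := by
  have h := Real.Gamma_mul_Gamma_one_sub s
  by_cases hsin : Real.sin (π * s) = 0
  · rw [hsin]
    rw [Real.sin_eq_zero_iff] at hsin
    obtain ⟨n, hn⟩ := hsin
    have hs' : s = n := by
      have hπ : (π : ℝ) ≠ 0 := Real.pi_ne_zero
      have : (n : ℝ) * π = s * π := by rw [hn]; ring
      exact (mul_right_cancel₀ hπ this).symm
    have hn0 : n ≤ 0 := by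
      by_contra hc
      push_neg at hc
      have : (1 : ℝ) ≤ n := by exact_mod_cast hc
      linarith [hs'.symm ▸ hs]
    have : Real.Gamma s = 0 := by
      have hcast : s = -(((-n).toNat : ℕ) : ℝ) := by
        rw [hs']
        have h1 : ((-n).toNat : ℤ) = -n := Int.toNat_of_nonneg (by linarith)
        have h2 := congrArg (fun k : ℤ => (k : ℝ)) h1
        simp only [Int.cast_natCast, Int.cast_neg] at h2
        rw [h2]; ring
      rw [hcast]
      exact Real.Gamma_neg_nat_eq_zero _
    rw [this]
    simp
  · have hΓ : Real.Gamma s ≠ 0 := by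
      intro h0
      rw [h0, zero_mul] at h
      have : (π : ℝ) / Real.sin (π * s) ≠ 0 :=
        div_ne_zero Real.pi_ne_zero hsin
      exact this h.symm
    have key : Real.Gamma (1 - s) * Real.sin (π * s) / π * Real.Gamma s = 1 := by
      have h2 : Real.Gamma (1 - s) * Real.sin (π * s) / π * Real.Gamma s
          = Real.Gamma s * Real.Gamma (1 - s) * Real.sin (π * s) / π := by ring
      rw [h2, h]
      field_simp
    exact inv_eq_of_mul_eq_one_left key

noncomputable def Xf : ℝ → ℝ := fun t =>
  t * Real.Gamma (t ^ 2 + 1 / 4) * Real.cos (π / 4 - π * t ^ 2) / π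
noncomputable def Yf : ℝ → ℝ := fun t =>
  -(Real.Gamma (t ^ 2 + 3 / 4) * Real.sin (π / 4 - π * t ^ 2) / π)

lemma Xf_eq (t : ℝ) : Xf t = t * (Real.Gamma (3 / 4 - t ^ 2))⁻¹ := by
  have h := rg_reflect (s := 3 / 4 - t ^ 2) (by nlinarith [sq_nonneg t])
  rw [h]
  have hsin : Real.sin (π * (3 / 4 - t ^ 2)) = Real.cos (π / 4 - π * t ^ 2) := by
    rw [show π / 4 - π * t ^ 2 = -(π / 2 - π * (3 / 4 - t ^ 2)) by ring, Real.cos_neg,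
      Real.cos_pi_div_two_sub]
  rw [hsin]
  rw [Xf]
  ring_nf

lemma Yf_eq (t : ℝ) : Yf t = -(Real.Gamma (1 / 4 - t ^ 2))⁻¹ := by
  have h := rg_reflect (s := 1 / 4 - t ^ 2) (by nlinarith [sq_nonneg t])
  rw [h]
  have hsin : Real.sin (π * (1 / 4 - t ^ 2)) = Real.sin (π / 4 - π * t ^ 2) := by
    congr 1
    ring
  rw [hsin]
  rw [Yf]
  ring_nf

noncomputable def Xd : ℝ → ℝ := fun t =>
  (Real.Gamma (t ^ 2 + 1 / 4) * Real.cos (π / 4 - π * t ^ 2)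
    + 2 * t ^ 2 * dG (t ^ 2 + 1 / 4) * Real.cos (π / 4 - π * t ^ 2)) / π
    + 2 * t ^ 2 * Real.Gamma (t ^ 2 + 1 / 4) * Real.sin (π / 4 - π * t ^ 2)

noncomputable def Yd : ℝ → ℝ := fun t =>
  (-(2 * t * dG (t ^ 2 + 3 / 4) * Real.sin (π / 4 - π * t ^ 2))
    + 2 * π * t * Real.Gamma (t ^ 2 + 3 / 4) * Real.cos (π / 4 - π * t ^ 2)) / π

lemma hz_sq (t : ℝ) : HasDerivAt (fun t : ℝ => t ^ 2) (2 * t) t := by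
  simpa using (hasDerivAt_pow 2 t)

lemma hasDerivAt_inner (t : ℝ) :
    HasDerivAt (fun t : ℝ => π / 4 - π * t ^ 2) (-(π * (2 * t))) t :=
  ((hz_sq t).const_mul π).const_sub (π / 4)

lemma hasDerivAt_A (t : ℝ) :
    HasDerivAt (fun t : ℝ => Real.Gamma (t ^ 2 + 1 / 4)) (dG (t ^ 2 + 1 / 4) * (2 * t)) t := by
  exact (hasDerivAt_Gamma (by positivity)).comp t ((hz_sq t).add_const (1 / 4))

lemma hasDerivAt_B (t : ℝ) :
    HasDerivAt (fun t : ℝ => Real.Gamma (t ^ 2 + 3 / 4)) (dG (t ^ 2 + 3 / 4) * (2 * t)) t := by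
  exact (hasDerivAt_Gamma (by positivity)).comp t ((hz_sq t).add_const (3 / 4))

lemma hasDerivAt_cosin (t : ℝ) :
    HasDerivAt (fun t : ℝ => Real.cos (π / 4 - π * t ^ 2))
      (-Real.sin (π / 4 - π * t ^ 2) * (-(π * (2 * t)))) t :=
  (Real.hasDerivAt_cos _).comp t (hasDerivAt_inner t)

lemma hasDerivAt_sinin (t : ℝ) :
    HasDerivAt (fun t : ℝ => Real.sin (π / 4 - π * t ^ 2))
      (Real.cos (π / 4 - π * t ^ 2) * (-(π * (2 * t)))) t :=
  (Real.hasDerivAt_sin _).comp t (hasDerivAt_inner t)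

lemma hasDerivAt_Xf (t : ℝ) : HasDerivAt Xf (Xd t) t := by
  have h := (((hasDerivAt_id t).mul (hasDerivAt_A t)).mul (hasDerivAt_cosin t)).div_const π
  refine h.congr_deriv ?_
  rw [Xd]
  simp only [Pi.mul_apply, id]
  field_simp

lemma hasDerivAt_Yf (t : ℝ) : HasDerivAt Yf (Yd t) t := by
  have h := (((hasDerivAt_B t).mul (hasDerivAt_sinin t)).div_const π).neg
  refine h.congr_deriv ?_
  rw [Yd]
  field_simp
  ring

lemma continuousAt_dG {x : ℝ} (hx : 0 < x) : ContinuousAt dG x := by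
  exact (continuous_rg'.continuousAt.neg).div
    ((continuous_rg.continuousAt).pow 2) (pow_ne_zero _ (rg_pos hx).ne')

lemma continuous_Xd : Continuous Xd := by
  rw [continuous_iff_continuousAt]
  intro t
  have hsq : ContinuousAt (fun t : ℝ => t ^ 2 + 1 / 4) t := by fun_prop
  have hdG : ContinuousAt (fun t : ℝ => dG (t ^ 2 + 1 / 4)) t :=
    (continuousAt_dG (by positivity)).comp hsq
  have hGam : ContinuousAt (fun t : ℝ => Real.Gamma (t ^ 2 + 1 / 4)) t :=
    (hasDerivAt_A t).continuousAt
  have hcos : ContinuousAt (fun t : ℝ => Real.cos (π / 4 - π * t ^ 2)) t := by fun_prop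
  have hsin : ContinuousAt (fun t : ℝ => Real.sin (π / 4 - π * t ^ 2)) t := by fun_prop
  exact (((hGam.mul hcos).add (((continuousAt_const.mul ((continuousAt_id.pow 2))).mul
    hdG).mul hcos)).div_const π).add
    (((continuousAt_const.mul ((continuousAt_id.pow 2))).mul hGam).mul hsin)

lemma continuous_Yd : Continuous Yd := by
  rw [continuous_iff_continuousAt]
  intro t
  have hsq : ContinuousAt (fun t : ℝ => t ^ 2 + 3 / 4) t := by fun_prop
  have hdG : ContinuousAt (fun t : ℝ => dG (t ^ 2 + 3 / 4)) t :=
    (continuousAt_dG (by positivity)).comp hsq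
  have hGam : ContinuousAt (fun t : ℝ => Real.Gamma (t ^ 2 + 3 / 4)) t :=
    (hasDerivAt_B t).continuousAt
  have hcos : ContinuousAt (fun t : ℝ => Real.cos (π / 4 - π * t ^ 2)) t := by fun_prop
  have hsin : ContinuousAt (fun t : ℝ => Real.sin (π / 4 - π * t ^ 2)) t := by fun_prop
  exact ((((continuousAt_const.mul continuousAt_id).mul hdG).mul hsin).neg.add
    ((((continuousAt_const.mul continuousAt_id)).mul hGam).mul hcos)).div_const π

lemma sc_eq (t : ℝ) : Real.sin (π / 4 - π * t ^ 2) * Real.cos (π / 4 - π * t ^ 2)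
    = Real.cos (2 * π * t ^ 2) / 2 := by
  have h := Real.sin_two_mul (π / 4 - π * t ^ 2)
  have h2 : 2 * (π / 4 - π * t ^ 2) = π / 2 - 2 * π * t ^ 2 := by ring
  rw [h2, Real.sin_pi_div_two_sub] at h
  linarith

lemma cos_big_nonneg {z : ℝ} (hz : 0 ≤ z) (hle : z ≤ 1 / 4) : 0 ≤ Real.cos (2 * π * z) := by
  apply Real.cos_nonneg_of_mem_Icc
  constructor
  · nlinarith [Real.pi_pos]
  · nlinarith [Real.pi_pos]

lemma key_ineq {z D co : ℝ} (hz : 0 ≤ z) (hD0 : 0 ≤ D) (hDv : D * (z + 1 / 4) ≤ 1)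
    (hco1 : -1 ≤ co) (hco2 : co ≤ 1) (hconn : z ≤ 1 / 4 → 0 ≤ co) (hco0 : z = 0 → co = 1) :
    0 < co / 2 * (1 - 2 * z * D) + 2 * π * z := by
  rcases eq_or_lt_of_le hz with h0 | hzpos
  · have hz0 : z = 0 := h0.symm
    rw [hz0, hco0 hz0]
    norm_num
  · rcases le_or_gt z (1 / 4) with hle | hgt
    · have hconn' := hconn hle
      have hzD : 2 * z * D ≤ 1 := by nlinarith
      nlinarith [Real.pi_pos, mul_nonneg hz hD0]
    · have hzD0 : 0 ≤ z * D := mul_nonneg hz hD0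
      have hzD1 : z * D < 1 := by nlinarith
      nlinarith [Real.pi_gt_three]

lemma pos_cancel_sq {a b : ℝ} (_ha : a ≠ 0) (h2 : 0 < a ^ 2 * b) : 0 < b := by
  by_contra h3
  push_neg at h3
  nlinarith [sq_nonneg a]

lemma cross_pos (t : ℝ) : 0 < Xf t * Yd t - Yf t * Xd t := by
  set z : ℝ := t ^ 2 with hzdef
  have hz : 0 ≤ z := sq_nonneg t
  set A : ℝ := Real.Gamma (z + 1 / 4) with hAdef
  set B : ℝ := Real.Gamma (z + 3 / 4) with hBdef
  set Ap : ℝ := dG (z + 1 / 4) with hApdef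
  set Bp : ℝ := dG (z + 3 / 4) with hBpdef
  set c : ℝ := Real.cos (π / 4 - π * z) with hcdef
  set s : ℝ := Real.sin (π / 4 - π * z) with hsdef
  have hA : 0 < A := Real.Gamma_pos_of_pos (by linarith)
  have hB : 0 < B := Real.Gamma_pos_of_pos (by linarith)
  have pyth : s ^ 2 + c ^ 2 = 1 := Real.sin_sq_add_cos_sq _
  have hsc : s * c = Real.cos (2 * π * z) / 2 := sc_eq t
  -- the digamma difference
  have hv : (0:ℝ) < z + 1 / 4 := by linarith
  set D : ℝ := psi (z + 3 / 4) - psi (z + 1 / 4) with hDdef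
  have hDb := psi_half_bounds hv
  have hD0 : 0 ≤ D := by
    have h1 := hDb.1
    have h34 : z + 1 / 4 + 1 / 2 = z + 3 / 4 := by ring
    rw [h34] at h1
    rw [hDdef]
    linarith
  have hDv : D * (z + 1 / 4) ≤ 1 := by
    have := hDb.2
    have h34 : z + 1 / 4 + 1 / 2 = z + 3 / 4 := by ring
    rw [h34] at this
    calc D * (z + 1 / 4) ≤ (1 / (z + 1 / 4)) * (z + 1 / 4) := by
          apply mul_le_mul_of_nonneg_right _ hv.le
          rw [hDdef]; linarith
      _ = 1 := by field_simp
  -- relate dG to psi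
  have hApD : Ap = psi (z + 1 / 4) * A := by
    rw [hApdef, hAdef, psi]; field_simp
  have hBpD : Bp = psi (z + 3 / 4) * B := by
    rw [hBpdef, hBdef, psi]; field_simp
  have hK : Ap * B - A * Bp = -(A * B * D) := by
    rw [hApD, hBpD, hDdef]; ring
  -- main identity
  have e1 : π ^ 2 * (Xf t * Yd t - Yf t * Xd t)
      = 2 * z * (s * c) * (Ap * B - A * Bp) + A * B * (s * c)
        + 2 * π * z * A * B * (s ^ 2 + c ^ 2) := by
    rw [Xf, Yf, Xd, Yd]
    simp only [← hzdef, ← hAdef, ← hBdef, ← hApdef, ← hBpdef, ← hcdef, ← hsdef]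
    field_simp
    ring
  rw [pyth, hK, hsc] at e1
  -- now: π^2 * cross = A*B*( (cos(2πz)/2) * (1 - 2*z*D) + 2*π*z )
  have e2 : π ^ 2 * (Xf t * Yd t - Yf t * Xd t)
      = A * B * ((Real.cos (2 * π * z) / 2) * (1 - 2 * z * D) + 2 * π * z) := by
    rw [e1]; ring
  have hE : 0 < Real.cos (2 * π * z) / 2 * (1 - 2 * z * D) + 2 * π * z :=
    key_ineq hz hD0 hDv (Real.neg_one_le_cos _) (Real.cos_le_one _)
      (fun hle => cos_big_nonneg hz hle)
      (fun hz0 => by rw [hz0]; simp)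
  have hpos : 0 < π ^ 2 * (Xf t * Yd t - Yf t * Xd t) := by
    rw [e2]
    positivity
  exact pos_cancel_sq Real.pi_ne_zero hpos

noncomputable def Nf : ℝ → ℝ := fun t => Xf t ^ 2 + Yf t ^ 2

lemma continuous_Xf : Continuous Xf :=
  continuous_iff_continuousAt.mpr fun t => (hasDerivAt_Xf t).continuousAt

lemma continuous_Yf : Continuous Yf :=
  continuous_iff_continuousAt.mpr fun t => (hasDerivAt_Yf t).continuousAt

lemma sin_q_ne_zero_of_t_small {t : ℝ} (ht : t = 0) : Real.sin (π / 4 - π * t ^ 2) ≠ 0 := by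
  rw [ht]
  norm_num [Real.sin_pi_div_four]

lemma Nf_pos (t : ℝ) : 0 < Nf t := by
  rw [Nf]
  by_cases hs : Real.sin (π / 4 - π * t ^ 2) = 0
  · have ht : t ≠ 0 := fun h0 => sin_q_ne_zero_of_t_small h0 hs
    have hc : Real.cos (π / 4 - π * t ^ 2) ≠ 0 := by
      intro h
      have := Real.sin_sq_add_cos_sq (π / 4 - π * t ^ 2)
      rw [hs, h] at this
      norm_num at this
    have hX : Xf t ≠ 0 := by
      rw [Xf]
      apply div_ne_zero _ Real.pi_ne_zero
      exact mul_ne_zero (mul_ne_zero ht (Real.Gamma_pos_of_pos (by positivity)).ne') hc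
    have h1 : 0 < Xf t ^ 2 := lt_of_le_of_ne (sq_nonneg _) (Ne.symm (pow_ne_zero 2 hX))
    nlinarith [sq_nonneg (Yf t)]
  · have hY : Yf t ≠ 0 := by
      rw [Yf]
      apply neg_ne_zero.mpr
      apply div_ne_zero _ Real.pi_ne_zero
      exact mul_ne_zero (Real.Gamma_pos_of_pos (by positivity)).ne' hs
    have h1 : 0 < Yf t ^ 2 := lt_of_le_of_ne (sq_nonneg _) (Ne.symm (pow_ne_zero 2 hY))
    nlinarith [sq_nonneg (Xf t)]

noncomputable def om : ℝ → ℝ := fun t => (Xf t * Yd t - Yf t * Xd t) / Nf t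

lemma om_pos (t : ℝ) : 0 < om t := div_pos (cross_pos t) (Nf_pos t)

lemma continuous_Nf : Continuous Nf := (continuous_Xf.pow 2).add (continuous_Yf.pow 2)

lemma continuous_om : Continuous om := by
  apply Continuous.div ((continuous_Xf.mul continuous_Yd).sub (continuous_Yf.mul continuous_Xd))
    continuous_Nf
  exact fun t => (Nf_pos t).ne'

noncomputable def F : ℝ → ℝ := fun t => -(π / 2) + ∫ u in (0:ℝ)..t, om u

lemma hasDerivAt_F (t : ℝ) : HasDerivAt F (om t) t := by
  have h := (continuous_om.integral_hasStrictDerivAt 0 t).hasDerivAt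
  exact h.const_add (-(π / 2))

lemma F_zero : F 0 = -(π / 2) := by
  rw [F, intervalIntegral.integral_same, add_zero]

lemma continuous_F : Continuous F :=
  continuous_iff_continuousAt.mpr fun t => (hasDerivAt_F t).continuousAt

lemma strictMono_F : StrictMono F :=
  strictMono_of_deriv_pos fun t => by rw [(hasDerivAt_F t).deriv]; exact om_pos t

noncomputable def Pf : ℝ → ℝ := fun t => Xf t * Real.cos (F t) + Yf t * Real.sin (F t)
noncomputable def Qf : ℝ → ℝ := fun t => Yf t * Real.cos (F t) - Xf t * Real.sin (F t)

lemma hasDerivAt_cosF (t : ℝ) :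
    HasDerivAt (fun t => Real.cos (F t)) (-Real.sin (F t) * om t) t :=
  (Real.hasDerivAt_cos (F t)).comp t (hasDerivAt_F t)

lemma hasDerivAt_sinF (t : ℝ) :
    HasDerivAt (fun t => Real.sin (F t)) (Real.cos (F t) * om t) t :=
  (Real.hasDerivAt_sin (F t)).comp t (hasDerivAt_F t)

lemma hasDerivAt_Qf (t : ℝ) :
    HasDerivAt Qf (Yd t * Real.cos (F t) + Yf t * (-Real.sin (F t) * om t)
      - (Xd t * Real.sin (F t) + Xf t * (Real.cos (F t) * om t))) t :=
  ((hasDerivAt_Yf t).mul (hasDerivAt_cosF t)).sub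
    ((hasDerivAt_Xf t).mul (hasDerivAt_sinF t))

lemma hasDerivAt_Nf (t : ℝ) :
    HasDerivAt Nf (2 * Xf t * Xd t + 2 * Yf t * Yd t) t := by
  have h := ((hasDerivAt_Xf t).pow 2).add ((hasDerivAt_Yf t).pow 2)
  refine h.congr_deriv ?_
  ring

lemma hasDerivAt_H (t : ℝ) :
    HasDerivAt (fun t => Qf t ^ 2 / Nf t) 0 t := by
  have hQ := hasDerivAt_Qf t
  have hQsq := hQ.pow 2
  have hN := hasDerivAt_Nf t
  have h := hQsq.div hN (Nf_pos t).ne'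
  refine h.congr_deriv ?_
  rw [div_eq_zero_iff]
  left
  have hωN : om t * Nf t = Xf t * Yd t - Yf t * Xd t :=
    div_mul_cancel₀ _ (Nf_pos t).ne'
  simp only [Qf, Nf, pow_one, Pi.pow_apply] at hωN ⊢
  push_cast
  linear_combination (-2 * (Yf t * Real.cos (F t) - Xf t * Real.sin (F t))
    * (Xf t * Real.cos (F t) + Yf t * Real.sin (F t))) * hωN

lemma Qf_eq_zero (t : ℝ) : Qf t = 0 := by
  have hconst : ∀ x y : ℝ, (fun t => Qf t ^ 2 / Nf t) x = (fun t => Qf t ^ 2 / Nf t) y :=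
    is_const_of_deriv_eq_zero
      (fun x => (hasDerivAt_H x).differentiableAt)
      (fun x => (hasDerivAt_H x).deriv)
  have h0 : Qf 0 = 0 := by
    rw [Qf, F_zero, Real.cos_neg, Real.sin_neg, Real.cos_pi_div_two, Real.sin_pi_div_two]
    have : Xf 0 = 0 := by rw [Xf]; simp
    rw [this]
    ring
  have := hconst t 0
  simp only [h0] at this
  have h2 : Qf t ^ 2 / Nf t = 0 := by
    rw [this]; simp
  rw [div_eq_iff (Nf_pos t).ne', zero_mul] at h2
  exact pow_eq_zero_iff (by norm_num : (2:ℕ) ≠ 0) |>.mp h2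

lemma Pf_sq (t : ℝ) : Pf t ^ 2 = Nf t := by
  have hq := Qf_eq_zero t
  have pyth : Real.sin (F t) ^ 2 + Real.cos (F t) ^ 2 = 1 := Real.sin_sq_add_cos_sq _
  rw [Pf, Nf]
  rw [Qf] at hq
  linear_combination (-(Yf t * Real.cos (F t) - Xf t * Real.sin (F t))) * hq
    + (Xf t ^ 2 + Yf t ^ 2) * pyth

lemma Pf_zero_pos : 0 < Pf 0 := by
  rw [Pf, F_zero, Real.cos_neg, Real.sin_neg, Real.cos_pi_div_two, Real.sin_pi_div_two]
  have hX : Xf 0 = 0 := by rw [Xf]; simp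
  have hY : Yf 0 = -(Real.Gamma (1 / 4 - 0 ^ 2))⁻¹ := Yf_eq 0
  have h : (0:ℝ) < (Real.Gamma ((1:ℝ) / 4))⁻¹ :=
    inv_pos.mpr (Real.Gamma_pos_of_pos (by norm_num))
  rw [hX, hY]
  norm_num
  simpa using h

lemma continuous_Pf : Continuous Pf :=
  (continuous_Xf.mul (Real.continuous_cos.comp continuous_F)).add
    (continuous_Yf.mul (Real.continuous_sin.comp continuous_F))

lemma Pf_pos (t : ℝ) : 0 < Pf t := by
  by_contra h
  push_neg at h
  have hne : Pf t ≠ 0 := by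
    intro h0
    have := Pf_sq t
    rw [h0] at this
    have := Nf_pos t
    nlinarith
  have hlt : Pf t < 0 := lt_of_le_of_ne h hne
  have h0 : (0 : ℝ) ∈ uIcc (Pf 0) (Pf t) := by
    rw [mem_uIcc]
    right
    exact ⟨hlt.le, Pf_zero_pos.le⟩
  obtain ⟨c, _, hc⟩ := intermediate_value_uIcc (continuous_Pf.continuousOn) h0
  have hsq := Pf_sq c
  rw [hc] at hsq
  have := Nf_pos c
  nlinarith

lemma Xf_rep (t : ℝ) : Xf t = Pf t * Real.cos (F t) := by
  have hq := Qf_eq_zero t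
  have pyth : Real.sin (F t) ^ 2 + Real.cos (F t) ^ 2 = 1 := Real.sin_sq_add_cos_sq _
  rw [Qf] at hq
  rw [Pf]
  linear_combination (-Real.sin (F t)) * hq - Xf t * pyth

lemma Yf_rep (t : ℝ) : Yf t = Pf t * Real.sin (F t) := by
  have hq := Qf_eq_zero t
  have pyth : Real.sin (F t) ^ 2 + Real.cos (F t) ^ 2 = 1 := Real.sin_sq_add_cos_sq _
  rw [Qf] at hq
  rw [Pf]
  linear_combination (Real.cos (F t)) * hq - Yf t * pyth

theorem stmt9
    (θ : ℝ → ℝ)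
    (hθc : ContinuousOn θ (Ici 0)) (hθ0 : θ 0 = -(π/2))
    (hθ : ∀ z ≥ (0:ℝ), ∃ r > (0:ℝ),
      r * Real.cos (θ z) = Real.sqrt z * (Real.Gamma (3/4 - z))⁻¹ ∧
      r * Real.sin (θ z) = -(Real.Gamma (1/4 - z))⁻¹) :
    ∀ z₁ z₂ : ℝ, 0 ≤ z₁ → z₁ < z₂ → θ z₁ < θ z₂ := by
  -- the function g measures the angle discrepancy; it is a multiple of 2π everywhere
  set g : ℝ → ℝ := fun z => θ z - F (Real.sqrt z) with hgdef
  have hgc : ContinuousOn g (Ici 0) :=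
    hθc.sub ((continuous_F.comp Real.continuous_sqrt).continuousOn)
  have hg0 : g 0 = 0 := by
    simp only [hgdef, Real.sqrt_zero, F_zero, hθ0]
    ring
  have hgint : ∀ z ∈ Ici (0:ℝ), ∃ n : ℤ, g z = n * (2 * π) := by
    intro z hz
    rw [mem_Ici] at hz
    obtain ⟨r, hr, h1, h2⟩ := hθ z hz
    set t := Real.sqrt z with htdef
    have ht2 : t ^ 2 = z := Real.sq_sqrt hz
    have hXt : Xf t = r * Real.cos (θ z) := by
      rw [Xf_eq, ht2, h1]
    have hYt : Yf t = r * Real.sin (θ z) := by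
      rw [Yf_eq, ht2, h2]
    have hP := Pf_pos t
    -- r = Pf t
    have hpyth1 : Real.sin (θ z) ^ 2 + Real.cos (θ z) ^ 2 = 1 := Real.sin_sq_add_cos_sq _
    have hpyth2 : Real.sin (F t) ^ 2 + Real.cos (F t) ^ 2 = 1 := Real.sin_sq_add_cos_sq _
    have hsq : r ^ 2 = Pf t ^ 2 := by
      have e1 : r ^ 2 = Xf t ^ 2 + Yf t ^ 2 := by
        rw [hXt, hYt]
        linear_combination (-(r ^ 2)) * hpyth1
      have e2 : Pf t ^ 2 = Xf t ^ 2 + Yf t ^ 2 := by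
        rw [Xf_rep, Yf_rep]
        linear_combination (-(Pf t ^ 2)) * hpyth2
      rw [e1, e2]
    have hrP : r = Pf t := by
      have hfac : (r - Pf t) * (r + Pf t) = 0 := by linear_combination hsq
      rcases mul_eq_zero.mp hfac with h | h
      · linarith
      · linarith
    have hcos : Real.cos (θ z) = Real.cos (F t) := by
      have := hXt
      rw [Xf_rep, hrP] at this
      exact (mul_left_cancel₀ (by linarith : Pf t ≠ 0) this.symm)
    have hsin : Real.sin (θ z) = Real.sin (F t) := by
      have := hYt
      rw [Yf_rep, hrP] at this
      exact (mul_left_cancel₀ (by linarith : Pf t ≠ 0) this.symm)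
    have hcossub : Real.cos (θ z - F t) = 1 := by
      rw [Real.cos_sub, hcos, hsin]
      linear_combination hpyth2
    obtain ⟨n, hn⟩ := (Real.cos_eq_one_iff _).mp hcossub
    exact ⟨n, by rw [hgdef]; simp only; linarith⟩
  -- g is identically zero on Ici 0
  have hgzero : ∀ z ∈ Ici (0:ℝ), g z = 0 := by
    intro z hz
    rw [mem_Ici] at hz
    by_contra hne
    obtain ⟨n, hn⟩ := hgint z hz
    have hn0 : n ≠ 0 := by
      intro h
      rw [h] at hn
      simp at hn
      exact hne hn
    have hIcc : Icc (0:ℝ) z ⊆ Ici 0 := fun x hx => hx.1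
    have hgc' : ContinuousOn g (Icc 0 z) := hgc.mono hIcc
    rcases lt_or_gt_of_ne hn0 with hneg | hpos
    · -- n ≤ -1 : g z ≤ -2π < -π < 0 = g 0
      have hn1 : (n : ℝ) ≤ -1 := by
        have : n ≤ -1 := by omega
        exact_mod_cast this
      have hgz : g z ≤ -(2 * π) := by
        rw [hn]
        nlinarith [Real.pi_pos]
      have hmem : -π ∈ Icc (g z) (g 0) := by
        rw [hg0]
        constructor
        · linarith [Real.pi_pos]
        · linarith [Real.pi_pos]
      obtain ⟨c, hcmem, hgc2⟩ := intermediate_value_Icc' hz hgc' hmem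
      obtain ⟨m, hm⟩ := hgint c (hIcc hcmem)
      have heq : (m : ℝ) * (2 * π) = -π := hm.symm.trans hgc2
      have hodd : (2 * (m:ℝ) + 1) * π = 0 := by linarith
      have hz2 : (2 * (m:ℝ) + 1) = 0 := by
        rcases mul_eq_zero.mp hodd with h | h
        · exact h
        · exact absurd h Real.pi_ne_zero
      have : (2 * m + 1 : ℤ) = 0 := by exact_mod_cast hz2
      omega
    · -- n ≥ 1 : g z ≥ 2π > π > 0 = g 0
      have hn1 : (1 : ℝ) ≤ (n : ℝ) := by
        have : 1 ≤ n := hpos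
        exact_mod_cast this
      have hgz : 2 * π ≤ g z := by
        rw [hn]
        nlinarith [Real.pi_pos]
      have hmem : π ∈ Icc (g 0) (g z) := by
        rw [hg0]
        constructor
        · linarith [Real.pi_pos]
        · linarith [Real.pi_pos]
      obtain ⟨c, hcmem, hgc2⟩ := intermediate_value_Icc hz hgc' hmem
      obtain ⟨m, hm⟩ := hgint c (hIcc hcmem)
      have heq : (m : ℝ) * (2 * π) = π := hm.symm.trans hgc2
      have hodd : (2 * (m:ℝ) - 1) * π = 0 := by linarith
      have hz2 : (2 * (m:ℝ) - 1) = 0 := by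
        rcases mul_eq_zero.mp hodd with h | h
        · exact h
        · exact absurd h Real.pi_ne_zero
      have : (2 * m - 1 : ℤ) = 0 := by exact_mod_cast hz2
      omega
  -- conclude
  intro z₁ z₂ hz₁ hlt
  have hz₂ : (0:ℝ) ≤ z₂ := le_trans hz₁ hlt.le
  have e1 : θ z₁ = F (Real.sqrt z₁) := by
    have := hgzero z₁ (mem_Ici.mpr hz₁)
    rw [hgdef] at this
    simp only at this
    linarith
  have e2 : θ z₂ = F (Real.sqrt z₂) := by
    have := hgzero z₂ (mem_Ici.mpr hz₂)
    rw [hgdef] at this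
    simp only at this
    linarith
  rw [e1, e2]
  exact strictMono_F (Real.sqrt_lt_sqrt hz₁ hlt)
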